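/- Let r ≥ 0 be an integer, m ∈ ℕ and μ ∈ (−1,1). If f is of Type(μ, 2m, {0}) and g ∈ C^{2m}([0,1]) satisfies Assumption A(r), then there exists a positive constant c such that for all κ > 1 and all x ∈ (0,1], |φ_κ^{(2m)}(x)| ≤ c λ_r^μ x^{μ−2m}, where φ_κ(x) := f(λ_r x) e^{iκ g(λ_r x)}. -/

import Mathlib

open scoped BigOperators

noncomputable section

lemma iterFDW_nhds {E F : Type*} [NormedAddCommGroup E] [NormedSpace ℝ E]
    [NormedAddCommGroup F] [NormedSpace ℝ F] {f : E → F} {s : Set E} {x : E}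
    (h : s ∈ nhds x) (n : ℕ) :
    iteratedFDerivWithin ℝ n f s x = iteratedFDeriv ℝ n f x := by
  rw [← iteratedFDerivWithin_univ,
    iteratedFDerivWithin_congr_set (Filter.eventuallyEq_univ.2 h)]

lemma iterDW_nhds {F : Type*} [NormedAddCommGroup F] [NormedSpace ℝ F]
    {f : ℝ → F} {s : Set ℝ} {x : ℝ} (h : s ∈ nhds x) (n : ℕ) :
    iteratedDerivWithin n f s x = iteratedDeriv n f x := by
  rw [iteratedDerivWithin_eq_iteratedFDerivWithin, iteratedDeriv_eq_iteratedFDeriv,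
    iterFDW_nhds h]

lemma hasDerivAt_iteratedDeriv {F : Type*} [NormedAddCommGroup F] [NormedSpace ℝ F]
    {f : ℝ → F} {n j : ℕ} (hf : ContDiffOn ℝ n f (Set.Ioo 0 1)) (hj : j + 1 ≤ n)
    {t : ℝ} (ht : t ∈ Set.Ioo (0:ℝ) 1) :
    HasDerivAt (iteratedDeriv j f) (iteratedDeriv (j+1) f t) t := by
  have hopen : IsOpen (Set.Ioo (0:ℝ) 1) := isOpen_Ioo
  have hnb : Set.Ioo (0:ℝ) 1 ∈ nhds t := hopen.mem_nhds ht
  have hdiff : DifferentiableOn ℝ (iteratedDerivWithin j f (Set.Ioo 0 1)) (Set.Ioo 0 1) := by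
    apply hf.differentiableOn_iteratedDerivWithin _ hopen.uniqueDiffOn
    exact_mod_cast Nat.lt_of_succ_le hj
  have heq : iteratedDerivWithin j f (Set.Ioo (0:ℝ) 1) =ᶠ[nhds t] iteratedDeriv j f := by
    filter_upwards [hnb] with y hy
    exact iterDW_nhds (hopen.mem_nhds hy) j
  have hda : DifferentiableAt ℝ (iteratedDeriv j f) t := by
    have := (hdiff t ht).differentiableAt hnb
    exact this.congr_of_eventuallyEq heq.symm
  rw [iteratedDeriv_succ]
  exact hda.hasDerivAt

lemma iter_scale {F : Type*} [NormedAddCommGroup F] [NormedSpace ℝ F]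
    (f : ℝ → F) (n : ℕ) (hf : ContDiffOn ℝ n f (Set.Ioo 0 1)) {c : ℝ}
    (hc : 0 < c) (hc1 : c < 1) :
    ∀ j ≤ n, ∀ x ∈ Set.Ioc (0:ℝ) 1,
      iteratedDerivWithin j (fun y => f (c*y)) (Set.Ioc 0 1) x
        = c^j • iteratedDeriv j f (c*x) := by
  intro j
  induction j with
  | zero => intro _ x hx; simp
  | succ j IH =>
    intro hj x hx
    have hud : UniqueDiffOn ℝ (Set.Ioc (0:ℝ) 1) := uniqueDiffOn_Ioc 0 1
    have hcx : c * x ∈ Set.Ioo (0:ℝ) 1 :=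
      ⟨mul_pos hc hx.1, lt_of_le_of_lt (by nlinarith [hx.2, hc.le] : c * x ≤ c) hc1⟩
    rw [iteratedDerivWithin_succ]
    have hEq : Set.EqOn (iteratedDerivWithin j (fun y => f (c*y)) (Set.Ioc 0 1))
        (fun y => c^j • iteratedDeriv j f (c*y)) (Set.Ioc 0 1) := fun y hy =>
      IH (le_of_lt (Nat.lt_of_succ_le hj)) y hy
    rw [derivWithin_congr hEq (hEq hx)]
    have hkey : HasDerivAt (iteratedDeriv j f) (iteratedDeriv (j+1) f (c*x)) (c*x) :=
      hasDerivAt_iteratedDeriv hf hj hcx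
    have hlin : HasDerivAt (fun y : ℝ => c * y) c x := by
      simpa using (hasDerivAt_id x).const_mul c
    have hcomp : HasDerivAt (fun y => iteratedDeriv j f (c*y))
        (c • iteratedDeriv (j+1) f (c*x)) x := hkey.scomp x hlin
    have hsm : HasDerivAt (fun y => c^j • iteratedDeriv j f (c*y))
        (c^j • (c • iteratedDeriv (j+1) f (c*x))) x := hcomp.const_smul (c^j)
    rw [(hsm.hasDerivWithinAt.derivWithin (hud.uniqueDiffWithinAt hx))]
    rw [smul_smul, ← pow_succ]

lemma taylor_bnd (r : ℕ) (g : ℝ → ℝ) (hgr : ContDiffOn ℝ (r+1) g (Set.Icc 0 1))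
    (hg0 : ∀ j ≤ r, iteratedDerivWithin j g (Set.Icc 0 1) 0 = 0) {M : ℝ}
    (hM : ∀ t ∈ Set.Icc (0:ℝ) 1, |iteratedDerivWithin (r+1) g (Set.Icc 0 1) t| ≤ M) :
    ∀ j ≤ r+1, ∀ t ∈ Set.Icc (0:ℝ) 1,
      |iteratedDerivWithin j g (Set.Icc 0 1) t| ≤ M * t^(r+1-j) := by
  have hud : UniqueDiffOn ℝ (Set.Icc (0:ℝ) 1) := uniqueDiffOn_Icc zero_lt_one
  have hM0 : 0 ≤ M := le_trans (abs_nonneg _) (hM 0 (by norm_num))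
  suffices H : ∀ k ≤ r+1, ∀ t ∈ Set.Icc (0:ℝ) 1,
      |iteratedDerivWithin (r+1-k) g (Set.Icc 0 1) t| ≤ M * t^k by
    intro j hj t ht
    have := H (r+1-j) (Nat.sub_le _ _) t ht
    rwa [Nat.sub_sub_self hj] at this
  intro k
  induction k with
  | zero => intro _ t ht; simpa using hM t ht
  | succ k IH =>
    intro hk t ht
    have hk' : k ≤ r + 1 := le_of_lt (Nat.lt_of_succ_le hk)
    set j := r + 1 - (k+1) with hjdef
    have hjk : j + 1 = r + 1 - k := by omega
    have hjr : j ≤ r := by omega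
    have h0 : iteratedDerivWithin j g (Set.Icc 0 1) 0 = 0 := hg0 j hjr
    have hsub : Set.Icc (0:ℝ) t ⊆ Set.Icc 0 1 := Set.Icc_subset_Icc le_rfl ht.2
    have hder : ∀ y ∈ Set.Icc (0:ℝ) t,
        HasDerivWithinAt (iteratedDerivWithin j g (Set.Icc 0 1))
          (iteratedDerivWithin (j+1) g (Set.Icc 0 1) y) (Set.Icc 0 t) y := by
      intro y hy
      have hy1 : y ∈ Set.Icc (0:ℝ) 1 := hsub hy
      have hdiff : DifferentiableWithinAt ℝ (iteratedDerivWithin j g (Set.Icc 0 1))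
          (Set.Icc 0 1) y := by
        refine (hgr.differentiableOn_iteratedDerivWithin ?_ hud) y hy1
        exact_mod_cast (by omega : j < r + 1)
      have := hdiff.hasDerivWithinAt
      rw [← iteratedDerivWithin_succ] at this
      exact this.mono hsub
    have hbnd : ∀ y ∈ Set.Icc (0:ℝ) t,
        ‖iteratedDerivWithin (j+1) g (Set.Icc 0 1) y‖ ≤ M * t^k := by
      intro y hy
      have hy1 : y ∈ Set.Icc (0:ℝ) 1 := hsub hy
      have := IH hk' y hy1
      rw [← hjk] at this
      calc ‖iteratedDerivWithin (j+1) g (Set.Icc 0 1) y‖ ≤ M * y^k := this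
        _ ≤ M * t^k :=
            mul_le_mul_of_nonneg_left (pow_le_pow_left₀ hy.1 hy.2 k) hM0
    have := (convex_Icc (0:ℝ) t).norm_image_sub_le_of_norm_hasDerivWithin_le
      hder hbnd (Set.left_mem_Icc.2 ht.1) (Set.right_mem_Icc.2 ht.1)
    rw [h0] at this
    simpa [abs_of_nonneg ht.1, pow_succ, mul_comm, mul_assoc, mul_left_comm] using this

lemma unif_bnd (n : ℕ) (g : ℝ → ℝ) (hg : ContDiffOn ℝ n g (Set.Icc 0 1)) :
    ∃ M : ℝ, 0 < M ∧ ∀ j ≤ n, ∀ t ∈ Set.Icc (0:ℝ) 1,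
      |iteratedDerivWithin j g (Set.Icc 0 1) t| ≤ M := by
  have hud : UniqueDiffOn ℝ (Set.Icc (0:ℝ) 1) := uniqueDiffOn_Icc zero_lt_one
  have hcpt : IsCompact (Set.Icc (0:ℝ) 1) := isCompact_Icc
  have hbd : ∀ j : ℕ, j ≤ n → ∃ C : ℝ, ∀ t ∈ Set.Icc (0:ℝ) 1,
      |iteratedDerivWithin j g (Set.Icc 0 1) t| ≤ C := by
    intro j hj
    have hcont : ContinuousOn (iteratedDerivWithin j g (Set.Icc 0 1)) (Set.Icc 0 1) :=
      hg.continuousOn_iteratedDerivWithin (by exact_mod_cast hj) hud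
    obtain ⟨C, hC⟩ := hcpt.exists_bound_of_continuousOn hcont
    exact ⟨C, fun t ht => by simpa using hC t ht⟩
  choose C hC using fun j : Finset.range (n+1) => hbd j (Nat.lt_succ_iff.1 (Finset.mem_range.1 j.2))
  refine ⟨1 + ∑ j : Finset.range (n+1), |C j|, by positivity, ?_⟩
  intro j hj t ht
  have hjmem : j ∈ Finset.range (n+1) := Finset.mem_range.2 (Nat.lt_succ_of_le hj)
  calc |iteratedDerivWithin j g (Set.Icc 0 1) t| ≤ C ⟨j, hjmem⟩ := hC ⟨j, hjmem⟩ t ht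
    _ ≤ |C ⟨j, hjmem⟩| := le_abs_self _
    _ ≤ ∑ i : Finset.range (n+1), |C i| :=
        Finset.single_le_sum (f := fun i : Finset.range (n+1) => |C i|)
          (fun _ _ => abs_nonneg _) (Finset.mem_univ _)
    _ ≤ 1 + ∑ i : Finset.range (n+1), |C i| := by linarith

/-- uniform bound for iterated (real) Fréchet derivatives of a smooth function on a compact set -/
lemma unif_bnd' {E F : Type*} [NormedAddCommGroup E] [NormedSpace ℝ E]
    [NormedAddCommGroup F] [NormedSpace ℝ F] (n : ℕ) (f : E → F)
    (hf : ContDiff ℝ (⊤ : ℕ∞) f) {K : Set E} (hK : IsCompact K) :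
    ∃ M : ℝ, 0 < M ∧ ∀ j ≤ n, ∀ z ∈ K, ‖iteratedFDeriv ℝ j f z‖ ≤ M := by
  have hbd : ∀ j : ℕ, ∃ C : ℝ, ∀ z ∈ K, ‖iteratedFDeriv ℝ j f z‖ ≤ C := by
    intro j
    have hcont : Continuous (iteratedFDeriv ℝ j f) :=
      hf.continuous_iteratedFDeriv (by exact_mod_cast le_top)
    obtain ⟨C, hC⟩ := hK.exists_bound_of_continuousOn hcont.continuousOn
    exact ⟨C, hC⟩
  choose C hC using fun j : Finset.range (n+1) => hbd j
  refine ⟨1 + ∑ j : Finset.range (n+1), |C j|, by positivity, ?_⟩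
  intro j hj z hz
  have hjmem : j ∈ Finset.range (n+1) := Finset.mem_range.2 (Nat.lt_succ_of_le hj)
  calc ‖iteratedFDeriv ℝ j f z‖ ≤ C ⟨j, hjmem⟩ := hC ⟨j, hjmem⟩ z hz
    _ ≤ |C ⟨j, hjmem⟩| := le_abs_self _
    _ ≤ ∑ i : Finset.range (n+1), |C i| :=
        Finset.single_le_sum (f := fun i : Finset.range (n+1) => |C i|)
          (fun _ _ => abs_nonneg _) (Finset.mem_univ _)
    _ ≤ 1 + ∑ i : Finset.range (n+1), |C i| := by linarith

/-- `κ_{σ(r)} := κ` if `σ(r) ≤ 1`, and `κ σ(r)` otherwise. -/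
def kappaSigma (κ σr : ℝ) : ℝ := if σr ≤ 1 then κ else κ * σr

/-- `λ_r := κ_{σ(r)}^{-1/(r+1)}`. -/
def lambdaR (κ σr : ℝ) (r : ℕ) : ℝ := (kappaSigma κ σr) ^ (-(1:ℝ)/((r:ℝ)+1))

theorem stmt_8 (r m : ℕ) (hm : 1 ≤ m) (μ : ℝ) (hμ : μ ∈ Set.Ioo (-1:ℝ) 1)
    (f g : ℝ → ℝ) (σr : ℝ)
    (hfC : ContDiffOn ℝ (2*m) f (Set.Ioc 0 1))
    (hfb : ∃ cf : ℝ, 0 < cf ∧ ∀ j ≤ 2*m, ∀ x ∈ Set.Ioc (0:ℝ) 1,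
      |iteratedDerivWithin j f (Set.Ioc 0 1) x| ≤ cf * x ^ (μ - (j:ℝ)))
    (hg2m : ContDiffOn ℝ (2*m) g (Set.Icc 0 1))
    (hgr : ContDiffOn ℝ (r+1) g (Set.Icc 0 1))
    (hmono : StrictMonoOn g (Set.Icc 0 1))
    (hnoinfl : ConvexOn ℝ (Set.Icc 0 1) g ∨ ConcaveOn ℝ (Set.Icc 0 1) g)
    (hg0 : ∀ j ≤ r, iteratedDerivWithin j g (Set.Icc 0 1) 0 = 0)
    (hgne : ∀ x ∈ Set.Icc (0:ℝ) 1, iteratedDerivWithin (r+1) g (Set.Icc 0 1) x ≠ 0)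
    (hσ : IsGreatest
      ((fun x => |iteratedDerivWithin (r+1) g (Set.Icc 0 1) x| / ((r+1).factorial : ℝ)) ''
        Set.Icc 0 1) σr) :
    ∃ c : ℝ, 0 < c ∧ ∀ κ : ℝ, 1 < κ → ∀ x ∈ Set.Ioc (0:ℝ) 1,
      ‖iteratedDerivWithin (2*m)
          (fun y : ℝ => (f (lambdaR κ σr r * y) : ℂ) *
            Complex.exp (Complex.I * κ * g (lambdaR κ σr r * y)))
          (Set.Ioc 0 1) x‖
        ≤ c * (lambdaR κ σr r) ^ μ * x ^ (μ - (2*(m:ℝ))) := by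
  obtain ⟨cf, hcf, hfb'⟩ := hfb
  have hud : UniqueDiffOn ℝ (Set.Ioc (0:ℝ) 1) := uniqueDiffOn_Ioc 0 1
  have hudI : UniqueDiffOn ℝ (Set.Icc (0:ℝ) 1) := uniqueDiffOn_Icc zero_lt_one
  obtain ⟨⟨t0, ht0, hσeq⟩, hub⟩ := hσ
  have hfacpos : (0:ℝ) < ((r+1).factorial : ℝ) := by
    exact_mod_cast Nat.factorial_pos (r+1)
  have hσpos : 0 < σr := by
    rw [← hσeq]; exact div_pos (abs_pos.2 (hgne t0 ht0)) hfacpos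
  set Cg : ℝ := σr * ((r+1).factorial : ℝ) with hCg_def
  have hCgpos : 0 < Cg := mul_pos hσpos hfacpos
  have hGr1 : ∀ t ∈ Set.Icc (0:ℝ) 1, |iteratedDerivWithin (r+1) g (Set.Icc 0 1) t| ≤ Cg := by
    intro t ht
    have h1 : |iteratedDerivWithin (r+1) g (Set.Icc 0 1) t| / ((r+1).factorial : ℝ) ≤ σr :=
      hub ⟨t, ht, rfl⟩
    rw [div_le_iff₀ hfacpos] at h1
    exact h1
  have hTay := taylor_bnd r g hgr hg0 hGr1
  obtain ⟨M2, hM2pos, hM2⟩ := unif_bnd (2*m) g hg2m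
  set C1 : ℝ := Cg + M2 with hC1_def
  have hC1pos : 0 < C1 := by positivity
  set C2 : ℝ := max C1 1 with hC2_def
  have hC2_1 : 1 ≤ C2 := le_max_right _ _
  have hC1C2 : C1 ≤ C2 := le_max_left _ _
  have hC2pos : 0 < C2 := lt_of_lt_of_le one_pos hC2_1
  obtain ⟨Ce, hCepos, hCe⟩ := unif_bnd' (2*m) Complex.exp Complex.contDiff_exp
    (isCompact_closedBall (0:ℂ) (Cg+1))
  refine ⟨∑ i ∈ Finset.range (2*m+1), cf * ((2*m).choose i : ℝ) *
      ((2*m - i).factorial : ℝ) * Ce * C2^(2*m-i), ?_, ?_⟩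
  · apply Finset.sum_pos
    · intro i hi
      have him : i ≤ 2*m := Nat.lt_succ_iff.1 (Finset.mem_range.1 hi)
      have hch : 0 < (((2*m).choose i : ℕ) : ℝ) := by
        exact_mod_cast Nat.choose_pos him
      have hfa : 0 < (((2*m - i).factorial : ℕ) : ℝ) := by
        exact_mod_cast Nat.factorial_pos (2*m - i)
      positivity
    · exact ⟨0, Finset.mem_range.2 (by omega)⟩
  intro κ hκ x hx
  set L : ℝ := lambdaR κ σr r with hL_def
  have hκ0 : (0:ℝ) < κ := lt_trans one_pos hκ
  have hκσ : 1 < kappaSigma κ σr := by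
    unfold kappaSigma
    split
    · exact hκ
    · next h => push_neg at h; nlinarith
  have hκσ0 : 0 < kappaSigma κ σr := lt_trans one_pos hκσ
  have hκleκσ : κ ≤ kappaSigma κ σr := by
    unfold kappaSigma
    split
    · exact le_rfl
    · next h => push_neg at h; nlinarith
  have hL0 : 0 < L := Real.rpow_pos_of_pos hκσ0 _
  have hL1 : L < 1 := Real.rpow_lt_one_of_one_lt_of_neg hκσ
    (div_neg_of_neg_of_pos (by norm_num) (by positivity))
  have hLpow : L^(r+1) = (kappaSigma κ σr)⁻¹ := by
    rw [hL_def, lambdaR, ← Real.rpow_natCast ((kappaSigma κ σr) ^ (-(1:ℝ)/((r:ℝ)+1))) (r+1),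
      ← Real.rpow_mul hκσ0.le]
    have : (-(1:ℝ)/((r:ℝ)+1)) * ((r+1 : ℕ) : ℝ) = -1 := by
      push_cast
      field_simp
    rw [this, Real.rpow_neg_one]
  have hκL : κ * L^(r+1) ≤ 1 := by
    rw [hLpow, ← div_eq_mul_inv, div_le_one hκσ0]
    exact hκleκσ
  -- membership facts
  have hLx : ∀ y ∈ Set.Ioc (0:ℝ) 1, L*y ∈ Set.Ioo (0:ℝ) 1 := fun y hy =>
    ⟨mul_pos hL0 hy.1, lt_of_le_of_lt (mul_le_of_le_one_right hL0.le hy.2) hL1⟩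
  have hLxI : ∀ y ∈ Set.Ioc (0:ℝ) 1, L*y ∈ Set.Icc (0:ℝ) 1 := fun y hy =>
    ⟨(hLx y hy).1.le, (hLx y hy).2.le⟩
  -- smoothness of the pieces
  have hmaps : Set.MapsTo (fun y : ℝ => L*y) (Set.Ioc 0 1) (Set.Ioc 0 1) := fun y hy =>
    ⟨(hLx y hy).1, (hLx y hy).2.le⟩
  have hlinC : ContDiffOn ℝ (2*m) (fun y : ℝ => L*y) (Set.Ioc 0 1) :=
    (contDiff_const.mul contDiff_id).contDiffOn
  have hpC : ContDiffOn ℝ (2*m) (fun y => f (L*y)) (Set.Ioc 0 1) :=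
    hfC.comp hlinC hmaps
  have hqC : ContDiffOn ℝ (2*m) (fun y => g (L*y)) (Set.Ioc 0 1) :=
    (hg2m.mono (Set.Ioc_subset_Icc_self)).comp hlinC hmaps
  have hcoe : ⇑Complex.ofRealLI = fun t : ℝ => (t : ℂ) := rfl
  have hoqC : ContDiffOn ℝ (2*m) (⇑Complex.ofRealLI ∘ fun y => g (L*y)) (Set.Ioc 0 1) := by
    rw [hcoe]
    exact Complex.ofRealCLM.contDiff.comp_contDiffOn hqC
  have hopC : ContDiffOn ℝ (2*m) (⇑Complex.ofRealLI ∘ fun y => f (L*y)) (Set.Ioc 0 1) := by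
    rw [hcoe]
    exact Complex.ofRealCLM.contDiff.comp_contDiffOn hpC
  -- the inner phase function
  set h : ℝ → ℂ := fun y => Complex.I * (κ:ℂ) * ((g (L*y) : ℝ) : ℂ) with hh_def
  have hstep1 : h = (Complex.I * (κ:ℂ)) • (⇑Complex.ofRealLI ∘ fun y => g (L*y)) := by
    funext z
    simp only [hh_def, Pi.smul_apply, Function.comp_apply, smul_eq_mul, hcoe, mul_assoc]
  have hhC : ContDiffOn ℝ (2*m) h (Set.Ioc 0 1) := by
    rw [hstep1]
    exact ContDiffOn.congr (hoqC.const_smul (Complex.I * (κ:ℂ))) (fun y _ => rfl)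
  have hscaleg := iter_scale g (2*m) (hg2m.mono (Set.Ioo_subset_Icc_self)) hL0 hL1
  have hscalef := iter_scale f (2*m) (hfC.mono (Set.Ioo_subset_Ioc_self)) hL0 hL1
  -- norm of the iterated derivatives of h
  have hnorm_h : ∀ i ≤ 2*m, ∀ y ∈ Set.Ioc (0:ℝ) 1,
      ‖iteratedDerivWithin i h (Set.Ioc 0 1) y‖
        = κ * (L^i * |iteratedDerivWithin i g (Set.Icc 0 1) (L*y)|) := by
    intro i hi y hy
    have hiN : (i : ℕ∞) ≤ (2*m : ℕ) := by exact_mod_cast hi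
    rw [hstep1, iteratedDerivWithin_const_smul hy hud _ ((hoqC y hy).of_le (by exact_mod_cast hi)),
      norm_smul]
    have hnI : ‖Complex.I * (κ:ℂ)‖ = κ := by
      rw [norm_mul, Complex.norm_I, one_mul, Complex.norm_real, Real.norm_eq_abs,
        abs_of_pos hκ0]
    rw [hnI]
    congr 1
    rw [← norm_iteratedFDerivWithin_eq_norm_iteratedDerivWithin,
      Complex.ofRealLI.norm_iteratedFDerivWithin_comp_left ((hqC y hy).of_le (by exact_mod_cast hi))
        hud hy le_rfl,
      norm_iteratedFDerivWithin_eq_norm_iteratedDerivWithin,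
      hscaleg i hi y hy, norm_smul, Real.norm_eq_abs, Real.norm_eq_abs,
      abs_of_nonneg (pow_nonneg hL0.le i),
      ← iterDW_nhds (Icc_mem_nhds (hLx y hy).1 (hLx y hy).2) i]
  -- h maps (0,1] into the closed ball of radius Cg+1
  have hval_h : ∀ y ∈ Set.Ioc (0:ℝ) 1, ‖h y‖ ≤ Cg := by
    intro y hy
    have h0 := hnorm_h 0 (by omega) y hy
    simp only [iteratedDerivWithin_zero, pow_zero, one_mul] at h0
    have hb := hTay 0 (by omega) (L*y) (hLxI y hy)
    simp only [iteratedDerivWithin_zero, Nat.sub_zero] at hb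
    rw [h0]
    have hA1 : (κ * L^(r+1)) * y^(r+1) ≤ 1 :=
      mul_le_one₀ hκL (pow_nonneg hy.1.le _) (pow_le_one₀ hy.1.le hy.2)
    calc κ * |g (L*y)| ≤ κ * (Cg * (L*y)^(r+1)) :=
          mul_le_mul_of_nonneg_left hb hκ0.le
      _ = Cg * ((κ * L^(r+1)) * y^(r+1)) := by rw [mul_pow]; ring
      _ ≤ Cg * 1 := mul_le_mul_of_nonneg_left hA1 hCgpos.le
      _ = Cg := mul_one Cg
  have hmapsh : Set.MapsTo h (Set.Ioc 0 1) (Metric.closedBall (0:ℂ) (Cg+1)) := by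
    intro y hy
    rw [Metric.mem_closedBall, dist_zero_right]
    linarith [hval_h y hy]
  -- E2 : bound for the derivatives of h
  have hGle : ∀ i, 1 ≤ i → i ≤ 2*m →
      κ * L^i * |iteratedDerivWithin i g (Set.Icc 0 1) (L*x)| * x^i ≤ C1 * x := by
    intro i h1 h2
    have hLxI' : L*x ∈ Set.Icc (0:ℝ) 1 := hLxI x hx
    by_cases hir : i ≤ r+1
    · have hb := hTay i hir (L*x) hLxI'
      set d := r+1-i with hd
      have hid : i + d = r + 1 := by omega
      have step1 : κ * L^i * |iteratedDerivWithin i g (Set.Icc 0 1) (L*x)| * x^i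
          ≤ κ * L^i * (Cg * (L*x)^d) * x^i := by
        exact mul_le_mul_of_nonneg_right
          (mul_le_mul_of_nonneg_left hb (mul_nonneg hκ0.le (pow_nonneg hL0.le i)))
          (pow_nonneg hx.1.le i)
      have step2 : κ * L^i * (Cg * (L*x)^d) * x^i = Cg * ((κ * L^(r+1)) * x^(r+1)) := by
        rw [← hid, mul_pow, pow_add, pow_add]; ring
      have hxr : x^(r+1) ≤ x := by
        calc x^(r+1) ≤ x^1 := pow_le_pow_of_le_one hx.1.le hx.2 (by omega)
          _ = x := pow_one x
      have step3 : Cg * ((κ * L^(r+1)) * x^(r+1)) ≤ Cg * (1 * x) := by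
        apply mul_le_mul_of_nonneg_left _ hCgpos.le
        exact mul_le_mul hκL hxr (pow_nonneg hx.1.le _) one_pos.le
      calc κ * L^i * |iteratedDerivWithin i g (Set.Icc 0 1) (L*x)| * x^i
          ≤ κ * L^i * (Cg * (L*x)^d) * x^i := step1
        _ = Cg * ((κ * L^(r+1)) * x^(r+1)) := step2
        _ ≤ Cg * (1 * x) := step3
        _ = Cg * x := by ring
        _ ≤ C1 * x := mul_le_mul_of_nonneg_right (by rw [hC1_def]; linarith) hx.1.le
    · push_neg at hir
      have hb := hM2 i h2 (L*x) hLxI'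
      have hLi : κ * L^i ≤ 1 := by
        have hsplit : L^i = L^(r+1) * L^(i-(r+1)) := by
          rw [← pow_add]; congr 1; omega
        have h3 : L^(i-(r+1)) ≤ 1 := pow_le_one₀ hL0.le hL1.le
        calc κ * L^i = (κ * L^(r+1)) * L^(i-(r+1)) := by rw [hsplit]; ring
          _ ≤ 1 * 1 := mul_le_mul hκL h3 (pow_nonneg hL0.le _) one_pos.le
          _ = 1 := one_mul 1
      have hxi : x^i ≤ x := by
        calc x^i ≤ x^1 := pow_le_pow_of_le_one hx.1.le hx.2 h1
          _ = x := pow_one x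
      have t1 : κ * L^i * |iteratedDerivWithin i g (Set.Icc 0 1) (L*x)| ≤ 1 * M2 :=
        mul_le_mul hLi hb (abs_nonneg _) one_pos.le
      calc κ * L^i * |iteratedDerivWithin i g (Set.Icc 0 1) (L*x)| * x^i
          ≤ (1 * M2) * x := mul_le_mul t1 hxi (pow_nonneg hx.1.le i) (by positivity)
        _ ≤ C1 * x := by
            apply mul_le_mul_of_nonneg_right _ hx.1.le
            rw [hC1_def]; linarith
  have E2 : ∀ i, 1 ≤ i → i ≤ 2*m →
      ‖iteratedFDerivWithin ℝ i h (Set.Ioc 0 1) x‖ ≤ (C2/x)^i := by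
    intro i h1 h2
    rw [norm_iteratedFDerivWithin_eq_norm_iteratedDerivWithin, hnorm_h i h2 x hx]
    have hxipos : (0:ℝ) < x^i := pow_pos hx.1 i
    have key := hGle i h1 h2
    rw [div_pow, le_div_iff₀ hxipos]
    calc κ * (L^i * |iteratedDerivWithin i g (Set.Icc 0 1) (L*x)|) * x^i
        = κ * L^i * |iteratedDerivWithin i g (Set.Icc 0 1) (L*x)| * x^i := by ring
      _ ≤ C1 * x := key
      _ ≤ C2^i := by
          calc C1 * x ≤ C1 * 1 := mul_le_mul_of_nonneg_left hx.2 hC1pos.le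
            _ = C1 := mul_one C1
            _ ≤ C2 := hC1C2
            _ ≤ C2^i := le_self_pow₀ hC2_1 (by omega)
  -- E1 : bound for the derivatives of the amplitude
  have E1 : ∀ i ≤ 2*m,
      ‖iteratedFDerivWithin ℝ i (fun y => ((f (L*y) : ℝ) : ℂ)) (Set.Ioc 0 1) x‖
        ≤ cf * L^μ * x^(μ - (i:ℝ)) := by
    intro i hi
    have hiN : (i : ℕ∞) ≤ (2*m : ℕ) := by exact_mod_cast hi
    have haeq : (fun y => ((f (L*y) : ℝ) : ℂ)) = ⇑Complex.ofRealLI ∘ fun y => f (L*y) := rfl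
    rw [haeq,
      Complex.ofRealLI.norm_iteratedFDerivWithin_comp_left ((hpC x hx).of_le (by exact_mod_cast hi))
        hud hx le_rfl,
      norm_iteratedFDerivWithin_eq_norm_iteratedDerivWithin,
      hscalef i hi x hx, norm_smul, Real.norm_eq_abs, Real.norm_eq_abs,
      abs_of_nonneg (pow_nonneg hL0.le i),
      ← iterDW_nhds (Ioc_mem_nhds (hLx x hx).1 (hLx x hx).2) i]
    have hLxmem : L*x ∈ Set.Ioc (0:ℝ) 1 := ⟨(hLx x hx).1, (hLx x hx).2.le⟩
    have hb := hfb' i hi (L*x) hLxmem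
    calc L^i * |iteratedDerivWithin i f (Set.Ioc 0 1) (L*x)|
        ≤ L^i * (cf * (L*x) ^ (μ - (i:ℝ))) :=
          mul_le_mul_of_nonneg_left hb (pow_nonneg hL0.le i)
      _ = cf * L^μ * x^(μ - (i:ℝ)) := by
          rw [Real.mul_rpow hL0.le hx.1.le, ← Real.rpow_natCast L i,
            show L^(i:ℝ) * (cf * (L^(μ-(i:ℝ)) * x^(μ-(i:ℝ))))
              = cf * (L^(i:ℝ) * L^(μ-(i:ℝ))) * x^(μ-(i:ℝ)) from by ring,
            ← Real.rpow_add hL0, show (i:ℝ) + (μ - (i:ℝ)) = μ from by ring]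
  -- E3 : bound for the derivatives of the exponential factor
  have E3 : ∀ n' ≤ 2*m,
      ‖iteratedFDerivWithin ℝ n' (Complex.exp ∘ h) (Set.Ioc 0 1) x‖
        ≤ (n').factorial * Ce * (C2/x)^n' := by
    intro n' hn'
    have hball : UniqueDiffOn ℝ (Metric.closedBall (0:ℂ) (Cg+1)) := by
      apply uniqueDiffOn_convex (convex_closedBall _ _)
      refine ⟨0, Metric.ball_subset_interior_closedBall (Metric.mem_ball_self (by positivity))⟩
    have hnb : Metric.closedBall (0:ℂ) (Cg+1) ∈ nhds (h x) := by
      apply Filter.mem_of_superset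
        (Metric.isOpen_ball.mem_nhds (show h x ∈ Metric.ball (0:ℂ) (Cg+1) from ?_))
        Metric.ball_subset_closedBall
      rw [Metric.mem_ball, dist_zero_right]
      linarith [hval_h x hx]
    apply norm_iteratedFDerivWithin_comp_le
      (Complex.contDiff_exp.contDiffOn (s := Metric.closedBall (0:ℂ) (Cg+1))) hhC
      (by exact_mod_cast hn') hball hud hmapsh hx
    · intro i hi
      rw [iterFDW_nhds hnb]
      exact hCe i (le_trans hi hn') (h x)
        (Metric.mem_closedBall.2 (by rw [dist_zero_right]; linarith [hval_h x hx]))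
    · intro i h1i h2i
      exact E2 i h1i (le_trans h2i hn')
  -- Leibniz
  have hBC : ContDiffOn ℝ (2*m) (Complex.exp ∘ h) (Set.Ioc 0 1) :=
    Complex.contDiff_exp.comp_contDiffOn hhC
  have haC : ContDiffOn ℝ (2*m) (fun y => ((f (L*y) : ℝ) : ℂ)) (Set.Ioc 0 1) := hopC
  have hgoal_eq : (fun y : ℝ => (f (L * y) : ℂ) * Complex.exp (Complex.I * κ * g (L * y)))
      = fun y => (fun y => ((f (L*y) : ℝ) : ℂ)) y * (Complex.exp ∘ h) y := rfl
  rw [← norm_iteratedFDerivWithin_eq_norm_iteratedDerivWithin, hgoal_eq]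
  have hLeib := norm_iteratedFDerivWithin_mul_le (𝕜 := ℝ)
    haC hBC hud hx (le_refl ((2*m : ℕ) : WithTop ℕ∞))
  refine le_trans hLeib ?_
  have hxpow : ∀ i, i ≤ 2*m →
      x^(μ - (i:ℝ)) / x^(2*m-i) = x^(μ - (2*(m:ℝ))) := by
    intro i hi
    rw [← Real.rpow_natCast x (2*m-i), ← Real.rpow_sub hx.1]
    congr 1
    have hcast : ((2*m - i : ℕ) : ℝ) = 2*(m:ℝ) - (i:ℝ) := by
      rw [Nat.cast_sub hi]; push_cast; ring
    rw [hcast]; ring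
  have hLμ : (0:ℝ) < L^μ := Real.rpow_pos_of_pos hL0 μ
  calc ∑ i ∈ Finset.range (2*m+1), ((2*m).choose i : ℝ) *
        ‖iteratedFDerivWithin ℝ i (fun y => ((f (L*y) : ℝ) : ℂ)) (Set.Ioc 0 1) x‖ *
        ‖iteratedFDerivWithin ℝ (2*m-i) (Complex.exp ∘ h) (Set.Ioc 0 1) x‖
      ≤ ∑ i ∈ Finset.range (2*m+1), ((2*m).choose i : ℝ) *
        (cf * L^μ * x^(μ - (i:ℝ))) * (((2*m-i).factorial : ℝ) * Ce * (C2/x)^(2*m-i)) := by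
        apply Finset.sum_le_sum
        intro i hi
        have hi' : i ≤ 2*m := Nat.lt_succ_iff.1 (Finset.mem_range.1 hi)
        have e1 := E1 i hi'
        have e3 := E3 (2*m-i) (by omega)
        have hxμ : (0:ℝ) < x^(μ - (i:ℝ)) := Real.rpow_pos_of_pos hx.1 _
        have hchoose : (0:ℝ) ≤ ((2*m).choose i : ℝ) := Nat.cast_nonneg _
        apply mul_le_mul _ e3 (norm_nonneg _) _
        · exact mul_le_mul_of_nonneg_left e1 hchoose
        · apply mul_nonneg hchoose
          exact le_of_lt (by positivity)
    _ = (∑ i ∈ Finset.range (2*m+1), cf * ((2*m).choose i : ℝ) *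
        ((2*m - i).factorial : ℝ) * Ce * C2^(2*m-i)) * L^μ * x^(μ - (2*(m:ℝ))) := by
        rw [Finset.sum_mul, Finset.sum_mul]
        apply Finset.sum_congr rfl
        intro i hi
        have hi' : i ≤ 2*m := Nat.lt_succ_iff.1 (Finset.mem_range.1 hi)
        rw [div_pow, ← hxpow i hi']
        ring
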